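/- Let A ∈ ℝ^{d×d} be positive semidefinite and B ∈ ℝ^{d×d} positive definite, and let λ_1 ≥ ... ≥ λ_d be the generalized eigenvalues of the pencil (A,B). Then max over W ∈ ℝ^{d×k} of trace(WᵀAW(2I_k − WᵀBW)) equals λ_1 + ... + λ_k. -/

import Mathlib

open Matrix

lemma filter_lt_eq_map {d k : ℕ} (hkd : k ≤ d) :
    (Finset.univ.filter (fun j : Fin d => (j : ℕ) < k)) =
      (Finset.univ : Finset (Fin k)).map ⟨Fin.castLE hkd, Fin.castLE_injective hkd⟩ := by
  ext j
  simp only [Finset.mem_filter, Finset.mem_univ, true_and, Finset.mem_map,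
    Function.Embedding.coeFn_mk]
  constructor
  · intro h; exact ⟨⟨j, h⟩, by ext; simp⟩
  · rintro ⟨i, rfl⟩; simpa using i.2

lemma exchange {d k : ℕ} (hkd : k ≤ d) (lam t : Fin d → ℝ)
    (h0 : ∀ j, 0 ≤ lam j) (hdec : ∀ j l : Fin d, j ≤ l → lam l ≤ lam j)
    (ht0 : ∀ j, 0 ≤ t j) (ht1 : ∀ j, t j ≤ 1)
    (hsum : ∑ j, t j ≤ (k : ℝ)) :
    ∑ j, lam j * t j ≤ ∑ j ∈ Finset.univ.filter (fun j : Fin d => (j : ℕ) < k), lam j := by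
  have hcard : (Finset.univ.filter (fun j : Fin d => (j : ℕ) < k)).card = k := by
    rw [filter_lt_eq_map hkd, Finset.card_map, Finset.card_univ, Fintype.card_fin]
  set a : ℝ := if h : k < d then lam ⟨k, h⟩ else 0 with ha
  have ha0 : 0 ≤ a := by
    rw [ha]; split
    · exact h0 _
    · exact le_refl _
  have hlow : ∀ j : Fin d, (j : ℕ) < k → a ≤ lam j := by
    intro j hj
    rw [ha]; split_ifs with h
    · exact hdec j ⟨k, h⟩ (by simpa [Fin.le_iff_val_le_val] using hj.le)
    · exact h0 j
  have hhigh : ∀ j : Fin d, ¬ (j : ℕ) < k → lam j ≤ a := by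
    intro j hj
    have h : k < d := lt_of_le_of_lt (le_of_not_gt hj) j.2
    rw [ha, dif_pos h]
    exact hdec ⟨k, h⟩ j (by simpa [Fin.le_iff_val_le_val] using le_of_not_gt hj)
  have key : ∀ j : Fin d, lam j * t j ≤ a * t j + (if (j : ℕ) < k then lam j - a else 0) := by
    intro j
    by_cases hj : (j : ℕ) < k
    · rw [if_pos hj]
      nlinarith [hlow j hj, ht1 j, ht0 j]
    · rw [if_neg hj]
      nlinarith [hhigh j hj, ht0 j]
  calc ∑ j, lam j * t j
      ≤ ∑ j, (a * t j + if (j : ℕ) < k then lam j - a else 0) :=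
        Finset.sum_le_sum fun j _ => key j
    _ = a * ∑ j, t j + ∑ j ∈ Finset.univ.filter (fun j : Fin d => (j : ℕ) < k), (lam j - a) := by
        rw [Finset.sum_add_distrib, Finset.mul_sum, Finset.sum_filter]
    _ = a * ∑ j, t j + (∑ j ∈ Finset.univ.filter (fun j : Fin d => (j : ℕ) < k), lam j) - k * a := by
        rw [Finset.sum_sub_distrib, Finset.sum_const, hcard, nsmul_eq_mul]; ring
    _ ≤ a * k + (∑ j ∈ Finset.univ.filter (fun j : Fin d => (j : ℕ) < k), lam j) - k * a := by
        have := mul_le_mul_of_nonneg_left hsum ha0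
        linarith
    _ = _ := by ring


lemma scalar_bound {d k : ℕ} (hkd : k ≤ d) (lam : Fin d → ℝ)
    (h0 : ∀ j, 0 ≤ lam j) (hdec : ∀ j l : Fin d, j ≤ l → lam l ≤ lam j)
    (c : Fin k → Fin d → ℝ)
    (horth : ∀ i i' : Fin k, i ≠ i' → ∑ j, c i j * c i' j = 0) :
    ∑ i : Fin k, (∑ j, lam j * (c i j) ^ 2) * (2 - ∑ j, (c i j) ^ 2)
      ≤ ∑ j ∈ Finset.univ.filter (fun j : Fin d => (j : ℕ) < k), lam j := by
  set μ : Fin k → ℝ := fun i => ∑ j, (c i j) ^ 2 with hμ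
  have hμ0 : ∀ i, 0 ≤ μ i := fun i => Finset.sum_nonneg fun j _ => sq_nonneg _
  set u : Fin k → Fin d → ℝ := fun i j => (Real.sqrt (μ i))⁻¹ * c i j with hu
  have hczero : ∀ i, μ i = 0 → ∀ j, c i j = 0 := by
    intro i h j
    have h2 := (Finset.sum_eq_zero_iff_of_nonneg (fun j _ => sq_nonneg (c i j))).1 h j
      (Finset.mem_univ j)
    exact pow_eq_zero_iff two_ne_zero |>.1 h2
  have hcu : ∀ i j, (c i j) ^ 2 = μ i * (u i j) ^ 2 := by
    intro i j
    by_cases h : μ i = 0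
    · simp [hu, hczero i h j]
    · have h1 : μ i * ((Real.sqrt (μ i))⁻¹) ^ 2 = 1 := by
        rw [inv_pow, Real.sq_sqrt (hμ0 i), mul_inv_cancel₀ h]
      calc (c i j) ^ 2 = (μ i * ((Real.sqrt (μ i))⁻¹) ^ 2) * (c i j) ^ 2 := by rw [h1, one_mul]
        _ = μ i * (u i j) ^ 2 := by rw [hu]; ring
  have huorth : ∀ i i' : Fin k, i ≠ i' → ∑ j, u i j * u i' j = 0 := by
    intro i i' h
    have heq : ∀ j, u i j * u i' j
        = (Real.sqrt (μ i))⁻¹ * (Real.sqrt (μ i'))⁻¹ * (c i j * c i' j) := fun j => by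
      rw [hu]; ring
    rw [Finset.sum_congr rfl fun j _ => heq j, ← Finset.mul_sum, horth i i' h, mul_zero]
  have hnorm : ∀ i, ∑ j, (u i j) ^ 2 = if μ i = 0 then 0 else 1 := by
    intro i
    by_cases h : μ i = 0
    · rw [if_pos h]
      exact Finset.sum_eq_zero fun j _ => by simp [hu, hczero i h j]
    · rw [if_neg h]
      have heq : ∀ j, (u i j) ^ 2 = ((Real.sqrt (μ i))⁻¹) ^ 2 * (c i j) ^ 2 := fun j => by
        rw [hu]; ring
      rw [Finset.sum_congr rfl fun j _ => heq j, ← Finset.mul_sum,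
        show (∑ j, (c i j) ^ 2) = μ i from rfl, inv_pow, Real.sq_sqrt (hμ0 i),
        inv_mul_cancel₀ h]
  set t : Fin d → ℝ := fun j => ∑ i : Fin k, (u i j) ^ 2 with htdef
  have ht0 : ∀ j, 0 ≤ t j := fun j => Finset.sum_nonneg fun i _ => sq_nonneg _
  have ht1 : ∀ j, t j ≤ 1 := by
    intro jj
    set v : Fin d → ℝ := fun p => (if p = jj then (1 : ℝ) else 0) - ∑ i : Fin k, u i jj * u i p
      with hv
    have hnn : 0 ≤ ∑ p, (v p) ^ 2 := Finset.sum_nonneg fun p _ => sq_nonneg _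
    have hsq : ∑ p, (∑ i : Fin k, u i jj * u i p) ^ 2 = t jj := by
      have h1 : ∑ p, (∑ i : Fin k, u i jj * u i p) ^ 2
          = ∑ i : Fin k, ∑ i' : Fin k, (u i jj * u i' jj) * ∑ p, u i p * u i' p := by
        have e1 : ∀ p, (∑ i : Fin k, u i jj * u i p) ^ 2
            = ∑ i : Fin k, ∑ i' : Fin k, (u i jj * u i' jj) * (u i p * u i' p) := by
          intro p
          rw [sq, Finset.sum_mul_sum]
          exact Finset.sum_congr rfl fun i _ => Finset.sum_congr rfl fun i' _ => by ring
        rw [Finset.sum_congr rfl fun p _ => e1 p, Finset.sum_comm]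
        exact Finset.sum_congr rfl fun i _ => by
          rw [Finset.sum_comm]
          exact Finset.sum_congr rfl fun i' _ => by rw [Finset.mul_sum]
      rw [h1]
      have h2 : ∀ i : Fin k, ∑ i' : Fin k, (u i jj * u i' jj) * ∑ p, u i p * u i' p
          = (u i jj) ^ 2 := by
        intro i
        rw [Finset.sum_eq_single i]
        · have hmm : ∑ p, u i p * u i p = ∑ p, (u i p) ^ 2 :=
            Finset.sum_congr rfl fun p _ => (pow_two (u i p)).symm
          rw [hmm, hnorm i]
          by_cases h : μ i = 0
          · simp [h, hu, hczero i h jj]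
          · rw [if_neg h, mul_one, pow_two]
        · intro i' _ hne
          rw [huorth i i' (Ne.symm hne), mul_zero]
        · intro h; exact absurd (Finset.mem_univ i) h
      rw [Finset.sum_congr rfl fun i _ => h2 i]
    have expand : ∑ p, (v p) ^ 2 = 1 - t jj := by
      have e1 : ∀ p, (v p) ^ 2 = ((if p = jj then (1 : ℝ) else 0)
          - (if p = jj then 2 * (∑ i : Fin k, u i jj * u i p) else 0))
          + (∑ i : Fin k, u i jj * u i p) ^ 2 := by
        intro p
        rw [hv]
        by_cases h : p = jj <;> simp [h] <;> ring
      rw [Finset.sum_congr rfl fun p _ => e1 p, Finset.sum_add_distrib, Finset.sum_sub_distrib,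
        hsq, Finset.sum_ite_eq' Finset.univ jj, Finset.sum_ite_eq' Finset.univ jj]
      simp only [Finset.mem_univ, if_true]
      have h3 : ∑ i : Fin k, u i jj * u i jj = t jj :=
        Finset.sum_congr rfl fun i _ => (pow_two (u i jj)).symm
      rw [h3]; ring
    linarith [hnn, expand ▸ hnn]
  have hts : ∑ j, t j ≤ (k : ℝ) := by
    rw [htdef]
    calc ∑ j, ∑ i : Fin k, (u i j) ^ 2 = ∑ i : Fin k, ∑ j, (u i j) ^ 2 := Finset.sum_comm
      _ = ∑ i : Fin k, if μ i = 0 then 0 else 1 := Finset.sum_congr rfl fun i _ => hnorm i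
      _ ≤ ∑ _i : Fin k, (1 : ℝ) := Finset.sum_le_sum fun i _ => by split <;> norm_num
      _ = k := by simp
  have step1 : ∀ i : Fin k, (∑ j, lam j * (c i j) ^ 2) * (2 - μ i) ≤ ∑ j, lam j * (u i j) ^ 2 := by
    intro i
    have hr0 : 0 ≤ ∑ j, lam j * (u i j) ^ 2 :=
      Finset.sum_nonneg fun j _ => mul_nonneg (h0 j) (sq_nonneg _)
    have hsum2 : ∑ j, lam j * (c i j) ^ 2 = μ i * ∑ j, lam j * (u i j) ^ 2 := by
      rw [Finset.mul_sum]
      exact Finset.sum_congr rfl fun j _ => by rw [hcu i j]; ring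
    rw [hsum2]
    nlinarith [hμ0 i, hr0, mul_nonneg hr0 (sq_nonneg (1 - μ i))]
  calc ∑ i : Fin k, (∑ j, lam j * (c i j) ^ 2) * (2 - ∑ j, (c i j) ^ 2)
      ≤ ∑ i : Fin k, ∑ j, lam j * (u i j) ^ 2 := Finset.sum_le_sum fun i _ => step1 i
    _ = ∑ j, lam j * t j := by
        rw [Finset.sum_comm]
        exact Finset.sum_congr rfl fun j _ => by rw [htdef, Finset.mul_sum]
    _ ≤ _ := exchange hkd lam t h0 hdec ht0 ht1 hts


lemma quad_entry {m n : Type*} [Fintype m] [Fintype n] (X : Matrix m m ℝ) (W : Matrix m n ℝ)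
    (i l : n) : (Wᵀ * X * W) i l = ∑ p, W p i * ∑ q, X p q * W q l := by
  simp only [mul_apply, transpose_apply, Finset.sum_mul, Finset.mul_sum]
  rw [Finset.sum_comm]
  exact Finset.sum_congr rfl fun p _ => Finset.sum_congr rfl fun q _ => by ring

theorem stmt9 (d k : ℕ) (hkd : k ≤ d) (A B : Matrix (Fin d) (Fin d) ℝ)
    (hA : A.PosSemidef) (hB : B.PosDef)
    (lam : Fin d → ℝ) (w : Fin d → Fin d → ℝ)
    (horth : ∀ j l : Fin d, w j ⬝ᵥ B.mulVec (w l) = if j = l then 1 else 0)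
    (heig : ∀ j : Fin d, A.mulVec (w j) = lam j • B.mulVec (w j))
    (hdec : ∀ j l : Fin d, j ≤ l → lam l ≤ lam j) :
    IsGreatest
      (Set.range fun W : Matrix (Fin d) (Fin k) ℝ =>
        (Wᵀ * A * W * (2 - Wᵀ * B * W)).trace)
      (∑ j ∈ Finset.univ.filter (fun j : Fin d => (j : ℕ) < k), lam j) := by
  classical
  have hlam0 : ∀ j, 0 ≤ lam j := by
    intro j
    have h1 := hA.dotProduct_mulVec_nonneg (w j)
    have h2 : w j ⬝ᵥ A.mulVec (w j) = lam j := by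
      rw [heig j, dotProduct_smul, smul_eq_mul, horth j j, if_pos rfl, mul_one]
    rw [show star (w j) = w j from star_trivial _, h2] at h1
    exact h1
  constructor
  · -- membership: attained at W₀ with columns w_0,...,w_{k-1}
    refine ⟨Matrix.of fun (j : Fin d) (i : Fin k) => w (Fin.castLE hkd i) j, ?_⟩
    set W₀ : Matrix (Fin d) (Fin k) ℝ :=
      Matrix.of fun (j : Fin d) (i : Fin k) => w (Fin.castLE hkd i) j with hW₀
    have hXA : W₀ᵀ * A * W₀ = Matrix.diagonal (fun i : Fin k => lam (Fin.castLE hkd i)) := by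
      ext i l
      rw [quad_entry A W₀ i l,
        show (∑ p, W₀ p i * ∑ q, A p q * W₀ q l)
          = w (Fin.castLE hkd i) ⬝ᵥ A.mulVec (w (Fin.castLE hkd l)) from rfl,
        heig, dotProduct_smul, smul_eq_mul, horth]
      by_cases h : i = l
      · simp [h, Matrix.diagonal_apply]
      · have h2 : ¬ (Fin.castLE hkd i = Fin.castLE hkd l) := fun hh => h ((Fin.castLE_injective hkd) hh)
        simp [h, h2, Matrix.diagonal_apply]
    have hXB : W₀ᵀ * B * W₀ = 1 := by
      ext i l
      rw [quad_entry B W₀ i l,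
        show (∑ p, W₀ p i * ∑ q, B p q * W₀ q l)
          = w (Fin.castLE hkd i) ⬝ᵥ B.mulVec (w (Fin.castLE hkd l)) from rfl, horth]
      by_cases h : i = l
      · simp [h, Matrix.one_apply]
      · have h2 : ¬ (Fin.castLE hkd i = Fin.castLE hkd l) := fun hh => h ((Fin.castLE_injective hkd) hh)
        simp [h, h2, Matrix.one_apply]
    show (W₀ᵀ * A * W₀ * (2 - W₀ᵀ * B * W₀)).trace = _
    rw [hXA, hXB, show (2 : Matrix (Fin k) (Fin k) ℝ) - 1 = 1 by norm_num, mul_one,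
      trace_diagonal, filter_lt_eq_map hkd, Finset.sum_map]
    rfl
  · -- upper bound
    rintro x ⟨W, rfl⟩
    show (Wᵀ * A * W * (2 - Wᵀ * B * W)).trace ≤ _
    set M : Matrix (Fin d) (Fin d) ℝ := Matrix.of w with hM
    have hMBMt : M * B * Mᵀ = 1 := by
      ext j l
      rw [show M * B * Mᵀ = (Mᵀ)ᵀ * B * Mᵀ by rw [transpose_transpose],
        quad_entry B Mᵀ j l,
        show (∑ p, Mᵀ p j * ∑ q, B p q * Mᵀ q l) = w j ⬝ᵥ B.mulVec (w l) from rfl, horth]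
      simp [Matrix.one_apply]
    have hAM : A * Mᵀ = B * Mᵀ * Matrix.diagonal lam := by
      ext p j
      rw [Matrix.mul_diagonal]
      have hthis := congrFun (heig j) p
      simp only [mulVec, dotProduct, Pi.smul_apply, smul_eq_mul] at hthis
      simp only [mul_apply, transpose_apply, hM, Matrix.of_apply]
      rw [hthis]; ring
    have hinv : Mᵀ * (M * B) = 1 := mul_eq_one_comm.mp hMBMt
    set C : Matrix (Fin d) (Fin k) ℝ := M * B * W with hC
    have hW : W = Mᵀ * C := by
      rw [hC, show Mᵀ * (M * B * W) = (Mᵀ * (M * B)) * W by simp only [Matrix.mul_assoc],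
        hinv, Matrix.one_mul]
    have hMAMt : M * A * Mᵀ = Matrix.diagonal lam := by
      calc M * A * Mᵀ = M * (A * Mᵀ) := by rw [Matrix.mul_assoc]
        _ = M * (B * Mᵀ * Matrix.diagonal lam) := by rw [hAM]
        _ = (M * B * Mᵀ) * Matrix.diagonal lam := by simp only [Matrix.mul_assoc]
        _ = Matrix.diagonal lam := by rw [hMBMt, one_mul]
    have hWAW : Wᵀ * A * W = Cᵀ * Matrix.diagonal lam * C := by
      rw [hW, Matrix.transpose_mul, Matrix.transpose_transpose]
      calc Cᵀ * M * A * (Mᵀ * C) = Cᵀ * (M * A * Mᵀ) * C := by simp only [Matrix.mul_assoc]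
        _ = Cᵀ * Matrix.diagonal lam * C := by rw [hMAMt]
    have hWBW : Wᵀ * B * W = Cᵀ * C := by
      rw [hW, Matrix.transpose_mul, Matrix.transpose_transpose]
      calc Cᵀ * M * B * (Mᵀ * C) = Cᵀ * (M * B * Mᵀ) * C := by simp only [Matrix.mul_assoc]
        _ = Cᵀ * C := by rw [hMBMt, Matrix.mul_one]
    rw [hWAW, hWBW]
    -- spectral decomposition of G = Cᵀ * C
    have hG : (Cᵀ * C).IsHermitian := by
      have h := Matrix.isHermitian_conjTranspose_mul_self C
      rwa [Matrix.conjTranspose_eq_transpose_of_trivial] at h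
    set O : Matrix (Fin k) (Fin k) ℝ := (hG.eigenvectorUnitary : Matrix (Fin k) (Fin k) ℝ)
      with hO
    set μ : Fin k → ℝ := hG.eigenvalues with hμdef
    have hOmem := hG.eigenvectorUnitary.2
    have hOOt : O * Oᵀ = 1 := by
      have h := (Matrix.mem_unitaryGroup_iff).mp hOmem
      rwa [Matrix.star_eq_conjTranspose, Matrix.conjTranspose_eq_transpose_of_trivial] at h
    have hOtO : Oᵀ * O = 1 := by
      have h := (Matrix.mem_unitaryGroup_iff').mp hOmem
      rwa [Matrix.star_eq_conjTranspose, Matrix.conjTranspose_eq_transpose_of_trivial] at h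
    have hdiag : Oᵀ * (Cᵀ * C) * O = Matrix.diagonal μ := by
      have h := hG.conjStarAlgAut_star_eigenvectorUnitary
      rw [Unitary.conjStarAlgAut_star_apply] at h
      rwa [Matrix.star_eq_conjTranspose, Matrix.conjTranspose_eq_transpose_of_trivial,
        show (RCLike.ofReal ∘ hG.eigenvalues : Fin k → ℝ) = μ from rfl] at h
    set D : Matrix (Fin d) (Fin k) ℝ := C * O with hD
    have hDD : Dᵀ * D = Matrix.diagonal μ := by
      rw [hD, Matrix.transpose_mul]
      calc Oᵀ * Cᵀ * (C * O) = Oᵀ * (Cᵀ * C) * O := by simp only [Matrix.mul_assoc]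
        _ = Matrix.diagonal μ := hdiag
    -- trace invariance under the orthogonal change of basis
    have htr_inv : (Cᵀ * Matrix.diagonal lam * C * (2 - Cᵀ * C)).trace
        = (Dᵀ * Matrix.diagonal lam * D * (2 - Dᵀ * D)).trace := by
      have hDLD : Dᵀ * Matrix.diagonal lam * D = Oᵀ * (Cᵀ * Matrix.diagonal lam * C) * O := by
        rw [hD, Matrix.transpose_mul]; simp only [Matrix.mul_assoc]
      have hDDO : (2 : Matrix (Fin k) (Fin k) ℝ) - Dᵀ * D = Oᵀ * (2 - Cᵀ * C) * O := by
        rw [Matrix.mul_sub, Matrix.sub_mul, hDD, hdiag]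
        congr 1
        rw [mul_two, Matrix.add_mul, hOtO, one_add_one_eq_two]
      have key : ∀ X Y : Matrix (Fin k) (Fin k) ℝ,
          (Oᵀ * X * O * (Oᵀ * Y * O)).trace = (X * Y).trace := by
        intro X Y
        rw [show Oᵀ * X * O * (Oᵀ * Y * O) = Oᵀ * (X * (O * Oᵀ) * (Y * O)) by
          simp only [Matrix.mul_assoc], hOOt, Matrix.mul_one]
        rw [Matrix.trace_mul_comm]
        rw [show X * (Y * O) * Oᵀ = X * Y * (O * Oᵀ) by simp only [Matrix.mul_assoc], hOOt,
          Matrix.mul_one]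
      rw [hDLD, hDDO]
      exact (key _ _).symm
    rw [htr_inv]
    -- extract scalars
    have hDDe : ∀ i i' : Fin k, ∑ j, D j i * D j i' = if i = i' then μ i else 0 := by
      intro i i'
      calc ∑ j, D j i * D j i' = (Dᵀ * D) i i' := by simp [mul_apply]
        _ = Matrix.diagonal μ i i' := by rw [hDD]
        _ = if i = i' then μ i else 0 := Matrix.diagonal_apply _ _ _
    have hμi : ∀ i, μ i = ∑ j, (D j i) ^ 2 := by
      intro i
      rw [show (∑ j, (D j i) ^ 2) = ∑ j, D j i * D j i from
        Finset.sum_congr rfl fun j _ => pow_two _, hDDe i i, if_pos rfl]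
    have h2diag : (2 : Matrix (Fin k) (Fin k) ℝ) - Matrix.diagonal μ
        = Matrix.diagonal (fun i => 2 - μ i) := by
      rw [show (2 : Matrix (Fin k) (Fin k) ℝ) = Matrix.diagonal (fun _ => (2 : ℝ)) by
        rw [← one_add_one_eq_two, ← Matrix.diagonal_one, Matrix.diagonal_add]
        norm_num, Matrix.diagonal_sub]
    have hH : ∀ i, (Dᵀ * Matrix.diagonal lam * D) i i = ∑ j, lam j * (D j i) ^ 2 := by
      intro i
      calc (Dᵀ * Matrix.diagonal lam * D) i i = (Dᵀ * (Matrix.diagonal lam * D)) i i := by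
            rw [Matrix.mul_assoc]
        _ = ∑ j, D j i * (lam j * D j i) := by
            rw [mul_apply]
            refine Finset.sum_congr rfl fun j _ => ?_
            rw [transpose_apply, Matrix.diagonal_mul]
        _ = ∑ j, lam j * (D j i) ^ 2 := Finset.sum_congr rfl fun j _ => by ring
    have htr2 : (Dᵀ * Matrix.diagonal lam * D * (2 - Dᵀ * D)).trace
        = ∑ i : Fin k, (∑ j, lam j * (D j i) ^ 2) * (2 - ∑ j, (D j i) ^ 2) := by
      rw [hDD, h2diag, Matrix.trace]
      refine Finset.sum_congr rfl fun i _ => ?_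
      rw [Matrix.diag, Matrix.mul_diagonal, hH i, ← hμi i]
    rw [htr2]
    exact scalar_bound hkd lam hlam0 hdec (fun i j => D j i)
      (fun i i' hne => by rw [hDDe i i', if_neg hne])
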